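/- Let A and B be positively graded Noetherian rings over a field k = A_0 = B_0, with natural projections f : A → k and g : B → k, and let R = A ×_k B be the fiber product. If I ⊊ A is a graded (proper) ideal of A and J ⊊ B is a graded (proper) ideal of B, then the extensions satisfy IR ∩ JR = (0), i.e. IR + JR = IR ⊕ JR inside R. -/

import Mathlib

noncomputable section

lemma proj_eq_zero_of_mem_homog {k A : Type*} [Field k] [CommRing A] [Algebra k A]
    (𝒜 : ℕ → Submodule k A) [GradedAlgebra 𝒜]
    (h𝒜 : 𝒜 0 ≤ LinearMap.range (Algebra.linearMap k A))
    (f : A →ₐ[k] k) (hf : ∀ i, 0 < i → ∀ a ∈ 𝒜 i, f a = 0)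
    (I : Ideal A) (hI : I ≠ ⊤) (hIhom : I.IsHomogeneous 𝒜) :
    ∀ a ∈ I, f a = 0 := by
  intro a ha
  classical
  conv_lhs => rw [← DirectSum.sum_support_decompose 𝒜 a]
  rw [map_sum]
  apply Finset.sum_eq_zero
  intro i _
  rcases Nat.eq_zero_or_pos i with h0 | hpos
  · subst h0
    have hmem : (DirectSum.decompose 𝒜 a 0 : A) ∈ I := hIhom 0 ha
    obtain ⟨c, hc⟩ := h𝒜 (DirectSum.decompose 𝒜 a 0).2
    rw [Algebra.linearMap_apply] at hc
    by_cases hc0 : c = 0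
    · rw [← hc, hc0, map_zero, map_zero]
    · exact absurd (I.eq_top_of_isUnit_mem (hc ▸ hmem)
        ((algebraMap k A).isUnit_map (isUnit_iff_ne_zero.mpr hc0))) hI
  · exact hf i hpos _ (DirectSum.decompose 𝒜 a i).2


/-- The fiber product `A ×ₖ B = {(a,b) : f a = g b}`, as a subalgebra of `A × B`. -/
def fiberProd {k A B : Type*} [CommSemiring k] [Semiring A] [Semiring B]
    [Algebra k A] [Algebra k B] (f : A →ₐ[k] k) (g : B →ₐ[k] k) : Subalgebra k (A × B) :=
  AlgHom.equalizer (f.comp (AlgHom.fst k A B)) (g.comp (AlgHom.snd k A B))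

/-- The canonical map `ι₁ : A → A ×ₖ B`, `a ↦ (a, f a)`. -/
def fiberProdInl {k A B : Type*} [CommSemiring k] [Semiring A] [Semiring B]
    [Algebra k A] [Algebra k B] (f : A →ₐ[k] k) (g : B →ₐ[k] k) :
    A →ₐ[k] fiberProd f g :=
  AlgHom.codRestrict ((AlgHom.id k A).prod ((Algebra.ofId k B).comp f)) (fiberProd f g)
    (fun a => by first | simp [fiberProd, AlgHom.mem_equalizer, Algebra.ofId_apply, AlgHom.commutes] | (change f a = g (algebraMap k B (f a)); exact (g.commutes (f a)).symm))

/-- The canonical map `ι₂ : B → A ×ₖ B`, `b ↦ (g b, b)`. -/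
def fiberProdInr {k A B : Type*} [CommSemiring k] [Semiring A] [Semiring B]
    [Algebra k A] [Algebra k B] (f : A →ₐ[k] k) (g : B →ₐ[k] k) :
    B →ₐ[k] fiberProd f g :=
  AlgHom.codRestrict (((Algebra.ofId k A).comp g).prod (AlgHom.id k B)) (fiberProd f g)
    (fun b => by first | simp [fiberProd, AlgHom.mem_equalizer, Algebra.ofId_apply, AlgHom.commutes] | (change f (algebraMap k A (g b)) = g b; exact f.commutes (g b)))

/-- Let `A`, `B` be positively graded Noetherian rings over a field
`k = A₀ = B₀`, with the canonical projections `f : A → k`, `g : B → k`, and let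
`R = A ×ₖ B` be the fiber product. If `I ⊊ A` and `J ⊊ B` are proper graded ideals,
then `IR ∩ JR = (0)`, i.e. `IR + JR = IR ⊕ JR` in `R`. -/
theorem fiberProd_map_inf_map_eq_bot {k A B : Type*} [Field k] [CommRing A] [CommRing B]
    [Algebra k A] [Algebra k B] [IsNoetherianRing A] [IsNoetherianRing B]
    (𝒜 : ℕ → Submodule k A) (ℬ : ℕ → Submodule k B)
    [GradedAlgebra 𝒜] [GradedAlgebra ℬ]
    (h𝒜 : 𝒜 0 ≤ LinearMap.range (Algebra.linearMap k A))
    (hℬ : ℬ 0 ≤ LinearMap.range (Algebra.linearMap k B))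
    (f : A →ₐ[k] k) (g : B →ₐ[k] k)
    (hf : ∀ i, 0 < i → ∀ a ∈ 𝒜 i, f a = 0)
    (hg : ∀ i, 0 < i → ∀ b ∈ ℬ i, g b = 0)
    (I : Ideal A) (hI : I ≠ ⊤) (hIhom : I.IsHomogeneous 𝒜)
    (J : Ideal B) (hJ : J ≠ ⊤) (hJhom : J.IsHomogeneous ℬ) :
    Ideal.map (fiberProdInl f g) I ⊓ Ideal.map (fiberProdInr f g) J = ⊥ := by
  have hfI := proj_eq_zero_of_mem_homog 𝒜 h𝒜 f hf I hI hIhom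
  have hgJ := proj_eq_zero_of_mem_homog ℬ hℬ g hg J hJ hJhom
  set p₁ : fiberProd f g →ₐ[k] A := (AlgHom.fst k A B).comp (fiberProd f g).val
  set p₂ : fiberProd f g →ₐ[k] B := (AlgHom.snd k A B).comp (fiberProd f g).val
  have h1 : Ideal.map (fiberProdInl f g) I ≤ RingHom.ker p₂.toRingHom := by
    rw [Ideal.map_le_iff_le_comap]
    intro a ha
    have : (fiberProdInl f g a : A × B).2 = algebraMap k B (f a) := rfl
    simp only [Ideal.mem_comap, RingHom.mem_ker, AlgHom.toRingHom_eq_coe, RingHom.coe_coe,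
      AlgHom.comp_apply, Subalgebra.coe_val, p₂]
    show ((fiberProdInl f g a : A × B)).2 = 0
    rw [this, hfI a ha, map_zero]
  have h2 : Ideal.map (fiberProdInr f g) J ≤ RingHom.ker p₁.toRingHom := by
    rw [Ideal.map_le_iff_le_comap]
    intro b hb
    have : (fiberProdInr f g b : A × B).1 = algebraMap k A (g b) := rfl
    simp only [Ideal.mem_comap, RingHom.mem_ker, AlgHom.toRingHom_eq_coe, RingHom.coe_coe,
      AlgHom.comp_apply, Subalgebra.coe_val, p₁]
    show ((fiberProdInr f g b : A × B)).1 = 0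
    rw [this, hgJ b hb, map_zero]
  rw [eq_bot_iff]
  rintro x ⟨hx1, hx2⟩
  have e2 : (x : A × B).2 = 0 := h1 hx1
  have e1 : (x : A × B).1 = 0 := h2 hx2
  have : (x : A × B) = 0 := Prod.ext e1 e2
  exact Subtype.ext this
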